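/- Exponential decay of products of closed-loop transition matrices (Lemma 6.3, abstract form): Let N ≥ 1, n ≥ 1, λ > 0 and Ῡ > 0. Let K_0,…,K_N be symmetric n×n real matrices with K_N ⪰ λI and ‖K_k‖ ≤ Ῡ for all k = 0,…,N, and let E_k, G_k (k = 0,…,N−1) be n×n real matrices such that K_k = E_kᵀK_{k+1}E_k + G_k and G_k ⪰ λI for all k. Then for all 0 ≤ i ≤ j ≤ N−1: ‖E_jE_{j−1}⋯E_i‖ ≤ sqrt(Ῡ/λ) · ρ^{j−i+1}, where ρ = 1/sqrt(1 + λ/Ῡ) ∈ (0,1). -/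

import Mathlib

open Matrix BigOperators

/-- The spectral (operator) norm of a real matrix. -/
noncomputable def opNorm {m n : Type*} [Fintype m] [Fintype n] [DecidableEq n]
    (A : Matrix m n ℝ) : ℝ :=
  ‖LinearMap.toContinuousLinearMap (Matrix.toEuclideanLin A)‖

/-- The Euclidean norm of a vector in `ℝ^n`. -/
noncomputable def evNorm {n : ℕ} (x : Fin n → ℝ) : ℝ :=
  ‖(EuclideanSpace.equiv (Fin n) ℝ).symm x‖

/-- Ordered product of matrices: `prodE E i len = E (i+len-1) * ⋯ * E (i+1) * E i`. -/
def prodE {n : ℕ} (E : ℕ → Matrix (Fin n) (Fin n) ℝ) : ℕ → ℕ → Matrix (Fin n) (Fin n) ℝ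
  | _, 0 => 1
  | i, (len + 1) => E (i + len) * prodE E i len

lemma evNorm_mulVec_le {n : ℕ} (A : Matrix (Fin n) (Fin n) ℝ) (x : Fin n → ℝ) :
    evNorm (A *ᵥ x) ≤ opNorm A * evNorm x := by
  have h := (LinearMap.toContinuousLinearMap (Matrix.toEuclideanLin A)).le_opNorm
    ((EuclideanSpace.equiv (Fin n) ℝ).symm x)
  exact h

lemma opNorm_le' {n : ℕ} (A : Matrix (Fin n) (Fin n) ℝ) (C : ℝ) (hC : 0 ≤ C)
    (h : ∀ x : Fin n → ℝ, evNorm (A *ᵥ x) ≤ C * evNorm x) : opNorm A ≤ C := by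
  apply ContinuousLinearMap.opNorm_le_bound _ hC
  intro v
  have := h ((EuclideanSpace.equiv (Fin n) ℝ) v)
  simp [evNorm] at this; exact this

lemma dot_eq_inner {n : ℕ} (x y : Fin n → ℝ) :
    x ⬝ᵥ y = inner ℝ ((EuclideanSpace.equiv (Fin n) ℝ).symm x)
      ((EuclideanSpace.equiv (Fin n) ℝ).symm y) := by
  simp [dotProduct, PiLp.inner_apply, RCLike.inner_apply, mul_comm]

lemma dot_mulVec_le {n : ℕ} (A : Matrix (Fin n) (Fin n) ℝ) (x : Fin n → ℝ) :
    x ⬝ᵥ A *ᵥ x ≤ opNorm A * evNorm x ^ 2 := by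
  calc x ⬝ᵥ A *ᵥ x ≤ evNorm x * evNorm (A *ᵥ x) := by
        rw [dot_eq_inner]; exact real_inner_le_norm _ _
    _ ≤ evNorm x * (opNorm A * evNorm x) :=
        mul_le_mul_of_nonneg_left (evNorm_mulVec_le A x) (norm_nonneg _)
    _ = opNorm A * evNorm x ^ 2 := by ring

lemma dot_split {n : ℕ} (Ek Kk G : Matrix (Fin n) (Fin n) ℝ) (x : Fin n → ℝ) :
    x ⬝ᵥ (Ekᵀ * Kk * Ek + G) *ᵥ x
      = (Ek *ᵥ x) ⬝ᵥ Kk *ᵥ (Ek *ᵥ x) + x ⬝ᵥ G *ᵥ x := by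
  rw [Matrix.add_mulVec, dotProduct_add]
  congr 1
  rw [← Matrix.mulVec_mulVec, ← Matrix.mulVec_mulVec, Matrix.dotProduct_mulVec x,
    Matrix.vecMul_transpose, Matrix.dotProduct_mulVec (Ek *ᵥ x)]

/-- **Exponential decay of products of closed-loop transition matrices
(Lemma 6.3, abstract form).**  If `K_N ⪰ λI`, `‖K_k‖ ≤ Ῡ`, and
`K_k = E_kᵀK_{k+1}E_k + G_k` with `G_k ⪰ λI` (as quadratic forms), then
`‖E_jE_{j−1}⋯E_i‖ ≤ √(Ῡ/λ)·ρ^{j−i+1}` with `ρ = 1/√(1+λ/Ῡ)`. -/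
theorem exp_decay_transition_products
    (N n : ℕ) (hN : 1 ≤ N) (hn : 1 ≤ n)
    (lam Ybar : ℝ) (hlam : 0 < lam) (hYbar : 0 < Ybar)
    (K E G : ℕ → Matrix (Fin n) (Fin n) ℝ)
    (hKsymm : ∀ k ≤ N, (K k).IsSymm)
    (hKN : ∀ x : Fin n → ℝ, lam * evNorm x ^ 2 ≤ x ⬝ᵥ K N *ᵥ x)
    (hKbnd : ∀ k ≤ N, opNorm (K k) ≤ Ybar)
    (hrec : ∀ k < N, K k = (E k)ᵀ * K (k + 1) * E k + G k)
    (hG : ∀ k < N, ∀ x : Fin n → ℝ, lam * evNorm x ^ 2 ≤ x ⬝ᵥ G k *ᵥ x) :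
    ∀ i j, i ≤ j → j < N →
      opNorm (prodE E i (j - i + 1))
        ≤ Real.sqrt (Ybar / lam) * (1 / Real.sqrt (1 + lam / Ybar)) ^ (j - i + 1) := by
  intro i j hij hjN
  set a : ℝ := lam / Ybar with ha
  have ha0 : 0 < a := div_pos hlam hYbar
  have h1a : 0 < 1 + a := by linarith
  set r : ℝ := 1 / (1 + a) with hr
  have hr0 : 0 < r := by positivity
  -- quadratic form upper bound
  have hup : ∀ k ≤ N, ∀ x : Fin n → ℝ, x ⬝ᵥ K k *ᵥ x ≤ Ybar * evNorm x ^ 2 := by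
    intro k hk x
    calc x ⬝ᵥ K k *ᵥ x ≤ opNorm (K k) * evNorm x ^ 2 := dot_mulVec_le _ _
      _ ≤ Ybar * evNorm x ^ 2 := by
        have := sq_nonneg (evNorm x)
        nlinarith [hKbnd k hk]
  -- lower bound λ‖x‖² ≤ V_k(x) by backward induction
  have hlow : ∀ d k, k + d = N → ∀ x : Fin n → ℝ,
      lam * evNorm x ^ 2 ≤ x ⬝ᵥ K k *ᵥ x := by
    intro d
    induction d with
    | zero =>
      intro k hk x
      have : k = N := by omega
      rw [this]; exact hKN x
    | succ d ih =>
      intro k hk x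
      have hkN : k < N := by omega
      have h1 := ih (k + 1) (by omega) (E k *ᵥ x)
      have h2 := hG k hkN x
      have hid : x ⬝ᵥ K k *ᵥ x
          = (E k *ᵥ x) ⬝ᵥ K (k + 1) *ᵥ (E k *ᵥ x) + x ⬝ᵥ G k *ᵥ x := by
        rw [hrec k hkN]; exact dot_split _ _ _ _
      have h3 : 0 ≤ lam * evNorm (E k *ᵥ x) ^ 2 := by positivity
      linarith
  -- one-step decay
  have hstep : ∀ k < N, ∀ x : Fin n → ℝ,
      (1 + a) * ((E k *ᵥ x) ⬝ᵥ K (k + 1) *ᵥ (E k *ᵥ x)) ≤ x ⬝ᵥ K k *ᵥ x := by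
    intro k hkN x
    have h2 := hG k hkN x
    have hid : x ⬝ᵥ K k *ᵥ x
        = (E k *ᵥ x) ⬝ᵥ K (k + 1) *ᵥ (E k *ᵥ x) + x ⬝ᵥ G k *ᵥ x := by
      rw [hrec k hkN]; exact dot_split _ _ _ _
    have hupk := hup k hkN.le x
    -- V(k+1)(Ex) ≤ V_k(x) - λ‖x‖² ≤ Ybar‖x‖²
    have hVy : (E k *ᵥ x) ⬝ᵥ K (k + 1) *ᵥ (E k *ᵥ x) ≤ Ybar * evNorm x ^ 2 := by
      have h4 : 0 ≤ lam * evNorm x ^ 2 := by positivity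
      linarith
    have haY : a * Ybar = lam := by
      rw [ha]; field_simp
    nlinarith
  -- iterated decay
  have hiter : ∀ len, i + len ≤ N → ∀ x : Fin n → ℝ,
      (prodE E i len *ᵥ x) ⬝ᵥ K (i + len) *ᵥ (prodE E i len *ᵥ x)
        ≤ r ^ len * (x ⬝ᵥ K i *ᵥ x) := by
    intro len
    induction len with
    | zero =>
      intro _ x
      simp [prodE]
    | succ len ih =>
      intro hlen x
      have hy := ih (by omega) x
      set y : Fin n → ℝ := prodE E i len *ᵥ x with hydef
      have hEy : prodE E i (len + 1) *ᵥ x = E (i + len) *ᵥ y := by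
        rw [hydef, Matrix.mulVec_mulVec]; rfl
      have hst := hstep (i + len) (by omega) y
      rw [hEy]
      have hr1 : r * (1 + a) = 1 := by
        rw [hr]; field_simp
      calc (E (i + len) *ᵥ y) ⬝ᵥ K (i + len + 1) *ᵥ (E (i + len) *ᵥ y)
          = r * ((1 + a) * ((E (i + len) *ᵥ y) ⬝ᵥ K (i + len + 1) *ᵥ (E (i + len) *ᵥ y))) := by
            rw [← mul_assoc, hr1, one_mul]
        _ ≤ r * (y ⬝ᵥ K (i + len) *ᵥ y) := by
            exact mul_le_mul_of_nonneg_left hst hr0.le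
        _ ≤ r * (r ^ len * (x ⬝ᵥ K i *ᵥ x)) := mul_le_mul_of_nonneg_left hy hr0.le
        _ = r ^ (len + 1) * (x ⬝ᵥ K i *ᵥ x) := by ring
  -- put it together
  set len := j - i + 1 with hlen
  have hilen : i + len = j + 1 := by omega
  set C : ℝ := Real.sqrt (Ybar / lam) * (1 / Real.sqrt (1 + a)) ^ len with hC
  have hC0 : 0 ≤ C := by positivity
  apply opNorm_le' _ C hC0
  intro x
  have h1 := hiter len (by omega) x
  rw [hilen] at h1
  have h2 := hlow (N - (j + 1)) (j + 1) (by omega) (prodE E i len *ᵥ x)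
  have h3 := hup i (by omega) x
  have hsq : evNorm (prodE E i len *ᵥ x) ^ 2 ≤ (C * evNorm x) ^ 2 := by
    have hC2 : C ^ 2 = Ybar / lam * r ^ len := by
      rw [hC, mul_pow, ← pow_mul, mul_comm len 2, pow_mul, div_pow, one_pow,
        Real.sq_sqrt h1a.le]
      rw [Real.sq_sqrt (by positivity : (0:ℝ) ≤ Ybar / lam)]
    have hchain : lam * evNorm (prodE E i len *ᵥ x) ^ 2
        ≤ r ^ len * (Ybar * evNorm x ^ 2) := by
      have := mul_le_mul_of_nonneg_left h3 (by positivity : (0:ℝ) ≤ r ^ len)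
      linarith
    rw [mul_pow, hC2]
    have hd : evNorm (prodE E i len *ᵥ x) ^ 2 ≤ r ^ len * (Ybar * evNorm x ^ 2) / lam := by
      rw [le_div_iff₀ hlam]; linarith
    calc evNorm (prodE E i len *ᵥ x) ^ 2 ≤ r ^ len * (Ybar * evNorm x ^ 2) / lam := hd
      _ = Ybar / lam * r ^ len * evNorm x ^ 2 := by ring
  have h4 := Real.sqrt_le_sqrt hsq
  rw [Real.sqrt_sq (show (0:ℝ) ≤ evNorm (prodE E i len *ᵥ x) from norm_nonneg _),
    Real.sqrt_sq (mul_nonneg hC0 (show (0:ℝ) ≤ evNorm x from norm_nonneg _))] at h4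
  exact h4
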